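/- Let (M, τ) be a tracial von Neumann algebra and x ∈ M self-adjoint with ‖x‖ ≤ 1, such that x has no nonzero fixed vectors on L²(M, τ) (equivalently 1 − x is injective). If Σ_{k≥0} (k+1) τ(x²ᵏ) < ∞, then the partial sums ξ_N = Σ_{n=0}^N xⁿ · 1̂ form a Cauchy sequence in L²(M, τ), and its limit ξ satisfies (1−x)ξ = 1̂, i.e. 1 − x has an L² formal inverse. -/

import Mathlib

open scoped InnerProductSpace

/-- A tracial von Neumann algebra `(M, τ)`, presented concretely: a von Neumann
algebra `M` acting on the Hilbert space `H = L²(M, τ)` together with the cyclic,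
separating, tracial unit vector `Ω = 1̂`; the trace is `τ(a) = ⟪aΩ, Ω⟫`. -/
structure TracialVonNeumannAlgebra (H : Type*) [NormedAddCommGroup H]
    [InnerProductSpace ℂ H] [CompleteSpace H] where
  M : VonNeumannAlgebra H
  Ω : H
  norm_Ω : ‖Ω‖ = 1
  tracial : ∀ a b : H →L[ℂ] H, a ∈ M → b ∈ M →
    (inner ℂ ((a * b) Ω) Ω : ℂ) = (inner ℂ ((b * a) Ω) Ω : ℂ)
  separating : ∀ a : H →L[ℂ] H, a ∈ M → a Ω = 0 → a = 0
  cyclic : Dense {ξ : H | ∃ a ∈ M, a Ω = ξ}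

/-- The trace `τ(a) = ⟪aΩ, Ω⟫`. -/
noncomputable def TracialVonNeumannAlgebra.τ {H : Type*} [NormedAddCommGroup H]
    [InnerProductSpace ℂ H] [CompleteSpace H]
    (T : TracialVonNeumannAlgebra H) (a : H →L[ℂ] H) : ℂ :=
  inner ℂ (a T.Ω) T.Ω

open Finset in
/-- Counting lemma: the number of pairs `(n, m)` with `⌊(n+m)/2⌋ = k` in any
square block is at most `4(k+1)`. -/
lemma fiber_card_le (M N k : ℕ) :
    #{p ∈ Finset.Ico (M+1) (N+1) ×ˢ Finset.Ico (M+1) (N+1) | (p.1 + p.2) / 2 = k}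
      ≤ 4 * (k + 1) := by
  classical
  have h : #{p ∈ Finset.Ico (M+1) (N+1) ×ˢ Finset.Ico (M+1) (N+1) | (p.1 + p.2) / 2 = k}
      ≤ #(Finset.range (2*k+2) ×ˢ Finset.range 2) := by
    apply Finset.card_le_card_of_injOn (fun p => (p.1, (p.1 + p.2) % 2))
    · intro p hp
      simp only [Finset.mem_coe, Finset.mem_filter, Finset.mem_product, Finset.mem_Ico] at hp
      simp only [Finset.mem_coe, Finset.mem_product, Finset.mem_range]
      exact ⟨by omega, by omega⟩
    · intro p hp q hq he
      simp only [Finset.mem_coe, Finset.mem_filter] at hp hq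
      simp only [Prod.mk.injEq] at he
      have h1 : p.1 + p.2 = q.1 + q.2 := by omega
      have h2 : p.2 = q.2 := by omega
      exact Prod.ext he.1 h2
  calc _ ≤ #(Finset.range (2*k+2) ×ˢ Finset.range 2) := h
    _ = 4 * (k+1) := by simp [Finset.card_product]; ring

/-- let `x` be a self-adjoint contraction in a tracial von Neumann
algebra with no nonzero fixed vectors on `L²(M,τ)`. If `Σ_{k≥0} (k+1) τ(x^{2k}) < ∞`,
then the partial sums `ξ_N = Σ_{n=0}^N xⁿ 1̂` form a Cauchy sequence in `L²(M,τ)`,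
and the limit `ξ` satisfies `(1 − x) ξ = 1̂`, i.e. `1 − x` has an `L²` formal inverse. -/
theorem partial_sums_cauchy_and_formal_inverse
    {H : Type*} [NormedAddCommGroup H] [InnerProductSpace ℂ H] [CompleteSpace H]
    (T : TracialVonNeumannAlgebra H)
    (x : H →L[ℂ] H) (hx : x ∈ T.M)
    (hsa : ContinuousLinearMap.adjoint x = x) (hnorm : ‖x‖ ≤ 1)
    (hfix : ∀ ξ : H, x ξ = ξ → ξ = 0)
    (hsum : Summable (fun k : ℕ => ((k : ℝ) + 1) * (T.τ (x ^ (2 * k))).re)) :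
    CauchySeq (fun N : ℕ => ∑ n ∈ Finset.range (N + 1), (x ^ n) T.Ω) ∧
    ∃ ξ : H, Filter.Tendsto (fun N : ℕ => ∑ n ∈ Finset.range (N + 1), (x ^ n) T.Ω)
        Filter.atTop (nhds ξ) ∧ ((1 : H →L[ℂ] H) - x) ξ = T.Ω := by
  classical
  open Filter Finset in
  set Ω := T.Ω with hΩdef
  set g : ℕ → ℝ := fun k : ℕ => ((k : ℝ) + 1) * (T.τ (x ^ (2 * k))).re with hgdef
  set a : ℕ → ℝ := fun k => ‖(x ^ k) Ω‖ ^ 2 with hadef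
  set ξs : ℕ → H := fun N => ∑ n ∈ Finset.range (N + 1), (x ^ n) Ω with hξdef
  -- basic operator facts
  have hsa' : IsSelfAdjoint x := by
    rwa [← ContinuousLinearMap.star_eq_adjoint] at hsa
  have hstar : ∀ n : ℕ, ContinuousLinearMap.adjoint (x ^ n) = x ^ n := by
    intro n
    rw [← ContinuousLinearMap.star_eq_adjoint]
    exact hsa'.pow n
  have hinner : ∀ n m : ℕ, (inner ℂ ((x ^ n) Ω) ((x ^ m) Ω) : ℂ)
      = inner ℂ Ω ((x ^ (n + m)) Ω) := by
    intro n m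
    conv_lhs => rw [← hstar n]
    rw [ContinuousLinearMap.adjoint_inner_left]
    congr 1
    rw [pow_add, ContinuousLinearMap.mul_apply]
  have hpow : ∀ n : ℕ, ‖x ^ n‖ ≤ 1 := by
    intro n
    induction n with
    | zero => rw [pow_zero]; exact ContinuousLinearMap.norm_id_le
    | succ k ih =>
        calc ‖x ^ (k+1)‖ = ‖x ^ k * x‖ := by rw [pow_succ]
        _ ≤ ‖x ^ k‖ * ‖x‖ := norm_mul_le _ _
        _ ≤ 1 * 1 := mul_le_mul ih hnorm (norm_nonneg _) zero_le_one
        _ = 1 := one_mul 1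
  have hanti : ∀ j k : ℕ, j ≤ k → ‖(x ^ k) Ω‖ ≤ ‖(x ^ j) Ω‖ := by
    intro j k hjk
    obtain ⟨d, rfl⟩ := Nat.exists_eq_add_of_le hjk
    calc ‖(x ^ (j + d)) Ω‖ = ‖(x ^ d) ((x ^ j) Ω)‖ := by
          rw [add_comm, pow_add, ContinuousLinearMap.mul_apply]
      _ ≤ ‖x ^ d‖ * ‖(x ^ j) Ω‖ := ContinuousLinearMap.le_opNorm _ _
      _ ≤ 1 * ‖(x ^ j) Ω‖ := mul_le_mul_of_nonneg_right (hpow d) (norm_nonneg _)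
      _ = _ := one_mul _
  have ha_nonneg : ∀ k, 0 ≤ a k := fun k => sq_nonneg _
  -- identification of the trace values
  have hτ : ∀ k : ℕ, (T.τ (x ^ (2 * k))).re = a k := by
    intro k
    have h1 : (inner ℂ Ω ((x ^ (2 * k)) Ω) : ℂ) = (‖(x ^ k) Ω‖ : ℂ) ^ 2 := by
      rw [show 2 * k = k + k by ring, ← hinner k k]
      exact inner_self_eq_norm_sq_to_K _
    have h2 : (T.τ (x ^ (2 * k)) : ℂ) = starRingEnd ℂ (inner ℂ Ω ((x ^ (2 * k)) Ω) : ℂ) := by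
      rw [TracialVonNeumannAlgebra.τ, inner_conj_symm]
    rw [h2, h1]
    simp [hadef, ← Complex.ofReal_pow]
  have hg_eq : ∀ k : ℕ, g k = ((k : ℝ) + 1) * a k := by
    intro k; rw [hgdef]; simp only; rw [hτ]
  have hg_nonneg : ∀ k, 0 ≤ g k := by
    intro k; rw [hg_eq]; positivity
  -- per-term estimate
  have hkey : ∀ n m : ℕ, (inner ℂ ((x ^ n) Ω) ((x ^ m) Ω) : ℂ).re ≤ a ((n + m) / 2) := by
    intro n m
    set s := n + m with hs
    have hsplit : (s - s / 2) + s / 2 = s := by omega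
    have h1 : (inner ℂ ((x ^ n) Ω) ((x ^ m) Ω) : ℂ)
        = inner ℂ ((x ^ (s - s / 2)) Ω) ((x ^ (s / 2)) Ω) := by
      rw [hinner, hinner, hsplit]
    rw [h1]
    calc (inner ℂ ((x ^ (s - s / 2)) Ω) ((x ^ (s / 2)) Ω) : ℂ).re
        ≤ ‖(inner ℂ ((x ^ (s - s / 2)) Ω) ((x ^ (s / 2)) Ω) : ℂ)‖ := Complex.re_le_norm _
      _ ≤ ‖(x ^ (s - s / 2)) Ω‖ * ‖(x ^ (s / 2)) Ω‖ := norm_inner_le_norm _ _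
      _ ≤ ‖(x ^ (s / 2)) Ω‖ * ‖(x ^ (s / 2)) Ω‖ :=
          mul_le_mul_of_nonneg_right (hanti _ _ (by omega)) (norm_nonneg _)
      _ = a (s / 2) := by simp only [hadef]; ring
  -- main norm bound
  have hbound : ∀ M N : ℕ, M ≤ N →
      ‖ξs N - ξs M‖ ^ 2 ≤ 4 * ∑' k, g (k + (M + 1)) := by
    intro M N hMN
    set I := Finset.Ico (M + 1) (N + 1) with hI
    have hdiff : ξs N - ξs M = ∑ n ∈ I, (x ^ n) Ω := by
      rw [hξdef, hI]
      exact (Finset.sum_Ico_eq_sub _ (by omega)).symm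
    have hexp : ‖ξs N - ξs M‖ ^ 2
        = ∑ n ∈ I, ∑ m ∈ I, (inner ℂ ((x ^ n) Ω) ((x ^ m) Ω) : ℂ).re := by
      rw [hdiff, ← inner_self_eq_norm_sq (𝕜 := ℂ), sum_inner]
      simp only [inner_sum, map_sum, RCLike.re_to_complex]
    have hstep1 : ‖ξs N - ξs M‖ ^ 2 ≤ ∑ p ∈ I ×ˢ I, a ((p.1 + p.2) / 2) := by
      rw [hexp, Finset.sum_product]
      exact Finset.sum_le_sum fun n _ => Finset.sum_le_sum fun m _ => hkey n m
    set J := (I ×ˢ I).image (fun p : ℕ × ℕ => (p.1 + p.2) / 2) with hJ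
    have hstep2 : ∑ p ∈ I ×ˢ I, a ((p.1 + p.2) / 2)
        = ∑ k ∈ J, #{p ∈ I ×ˢ I | (p.1 + p.2) / 2 = k} • a k :=
      Finset.sum_comp a (fun p : ℕ × ℕ => (p.1 + p.2) / 2)
    have hstep3 : ∑ k ∈ J, #{p ∈ I ×ˢ I | (p.1 + p.2) / 2 = k} • a k
        ≤ ∑ k ∈ J, 4 * g k := by
      apply Finset.sum_le_sum
      intro k _
      rw [nsmul_eq_mul, hg_eq]
      have hcard : (#{p ∈ I ×ˢ I | (p.1 + p.2) / 2 = k} : ℝ) ≤ 4 * ((k : ℝ) + 1) := by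
        have := fiber_card_le M N k
        rw [hI]
        push_cast
        exact_mod_cast by exact_mod_cast (Nat.cast_le (α := ℝ)).2 this
      calc (#{p ∈ I ×ˢ I | (p.1 + p.2) / 2 = k} : ℝ) * a k
          ≤ (4 * ((k : ℝ) + 1)) * a k :=
            mul_le_mul_of_nonneg_right hcard (ha_nonneg k)
        _ = 4 * (((k : ℝ) + 1) * a k) := by ring
    have hJge : ∀ k ∈ J, M + 1 ≤ k := by
      intro k hk
      rw [hJ] at hk
      obtain ⟨p, hp, rfl⟩ := Finset.mem_image.1 hk
      rw [Finset.mem_product, hI] at hp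
      simp only [Finset.mem_Ico] at hp
      omega
    have hstep4 : ∑ k ∈ J, g k ≤ ∑' j, g (j + (M + 1)) := by
      have hsummable : Summable (fun j => g (j + (M + 1))) :=
        (summable_nat_add_iff (M + 1)).2 hsum
      have hinj : Set.InjOn (fun k => k - (M + 1)) J := by
        intro i hi j hj he
        have hi' := hJge i hi
        have hj' := hJge j hj
        simp only at he
        omega
      have him : ∑ j ∈ J.image (fun k => k - (M + 1)), g (j + (M + 1))
          = ∑ k ∈ J, g ((k - (M + 1)) + (M + 1)) := Finset.sum_image fun i hi j hj he =>
            hinj hi hj he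
      have heq : ∑ k ∈ J, g ((k - (M + 1)) + (M + 1)) = ∑ k ∈ J, g k := by
        apply Finset.sum_congr rfl
        intro k hk
        congr 1
        have := hJge k hk
        omega
      calc ∑ k ∈ J, g k = ∑ j ∈ J.image (fun k => k - (M + 1)), g (j + (M + 1)) := by
            rw [him, heq]
        _ ≤ ∑' j, g (j + (M + 1)) :=
            Summable.sum_le_tsum _ (fun j _ => hg_nonneg _) hsummable
    calc ‖ξs N - ξs M‖ ^ 2 ≤ ∑ p ∈ I ×ˢ I, a ((p.1 + p.2) / 2) := hstep1
      _ = ∑ k ∈ J, #{p ∈ I ×ˢ I | (p.1 + p.2) / 2 = k} • a k := hstep2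
      _ ≤ ∑ k ∈ J, 4 * g k := hstep3
      _ = 4 * ∑ k ∈ J, g k := by rw [Finset.mul_sum]
      _ ≤ 4 * ∑' j, g (j + (M + 1)) := by
          have := hstep4; linarith
  -- tails tend to zero
  have htail : Filter.Tendsto (fun M : ℕ => ∑' k, g (k + M)) Filter.atTop (nhds 0) := by
    have h1 := hsum.hasSum.tendsto_sum_nat
    have h2 : (fun M : ℕ => ∑' k, g (k + M))
        = fun M : ℕ => (∑' k, g k) - ∑ i ∈ Finset.range M, g i := by
      funext M
      have := Summable.sum_add_tsum_nat_add M hsum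
      linarith
    rw [h2]
    have h3 : Filter.Tendsto (fun _ : ℕ => ∑' k, g k) Filter.atTop (nhds (∑' k, g k)) :=
      tendsto_const_nhds
    simpa using h3.sub h1
  -- Cauchy
  have hcauchy : CauchySeq ξs := by
    rw [Metric.cauchySeq_iff']
    intro ε hε
    have hev : ∀ᶠ M in Filter.atTop, (∑' k, g (k + M)) < ε ^ 2 / 4 :=
      htail.eventually (gt_mem_nhds (by positivity))
    obtain ⟨M₀, hM₀⟩ := hev.exists_forall_of_atTop
    refine ⟨M₀, fun n hn => ?_⟩
    have hb := hbound M₀ n hn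
    have ht := hM₀ (M₀ + 1) (by omega)
    rw [dist_eq_norm]
    nlinarith [norm_nonneg (ξs n - ξs M₀)]
  obtain ⟨xiL, hlim⟩ := cauchySeq_tendsto_of_complete hcauchy
  refine ⟨hcauchy, xiL, hlim, ?_⟩
  -- x^k Ω → 0
  have ha_tendsto : Filter.Tendsto a Filter.atTop (nhds 0) := by
    have hg0 : Filter.Tendsto g Filter.atTop (nhds 0) := hsum.tendsto_atTop_zero
    apply squeeze_zero ha_nonneg _ hg0
    intro k
    rw [hg_eq]
    nlinarith [ha_nonneg k, Nat.cast_nonneg (α := ℝ) k]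
  have hnorm_tendsto : Filter.Tendsto (fun k => ‖(x ^ k) Ω‖) Filter.atTop (nhds 0) := by
    have := (Real.continuous_sqrt.tendsto 0).comp ha_tendsto
    simp only [Function.comp, Real.sqrt_zero] at this
    convert this using 2 with k
    rw [hadef]
    exact (Real.sqrt_sq (norm_nonneg _)).symm
  have hx_tendsto : Filter.Tendsto (fun N : ℕ => (x ^ (N + 1)) Ω) Filter.atTop (nhds 0) := by
    rw [tendsto_zero_iff_norm_tendsto_zero]
    exact hnorm_tendsto.comp (Filter.tendsto_add_atTop_nat 1)
  -- telescoping
  have htele : ∀ N : ℕ, ((1 : H →L[ℂ] H) - x) (ξs N) = Ω - (x ^ (N + 1)) Ω := by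
    intro N
    rw [hξdef]
    simp only [ContinuousLinearMap.sub_apply, ContinuousLinearMap.one_apply, map_sum]
    have : ∀ n : ℕ, x ((x ^ n) Ω) = (x ^ (n + 1)) Ω := by
      intro n
      rw [pow_succ', ContinuousLinearMap.mul_apply]
    simp only [this]
    rw [Finset.sum_range_sub' (fun n => (x ^ n) Ω)]
    simp
  have h1 : Filter.Tendsto (fun N => ((1 : H →L[ℂ] H) - x) (ξs N)) Filter.atTop
      (nhds (((1 : H →L[ℂ] H) - x) xiL)) :=
    (((1 : H →L[ℂ] H) - x).continuous.tendsto xiL).comp hlim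
  have h2 : Filter.Tendsto (fun N => ((1 : H →L[ℂ] H) - x) (ξs N)) Filter.atTop (nhds Ω) := by
    have heq : (fun N => ((1 : H →L[ℂ] H) - x) (ξs N)) = fun N => Ω - (x ^ (N + 1)) Ω :=
      funext htele
    rw [heq]
    have hc : Filter.Tendsto (fun _ : ℕ => Ω) Filter.atTop (nhds Ω) := tendsto_const_nhds
    simpa using hc.sub hx_tendsto
  exact tendsto_nhds_unique h1 h2
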